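/- In the purely fermionic case: ℋ^f_k = 0 for every integer k > n, and dim ℋ^f_k = C(2n, k) − C(2n, k−2) for every 0 ≤ k ≤ n (with C(2n, j) = 0 for j < 0). -/

import Mathlib

set_option synthInstance.maxHeartbeats 1000000
set_option maxHeartbeats 1000000

noncomputable section

/-- The Grassmann algebra Λ_{2n} on `2n` anticommuting generators. -/
abbrev Grass (n : ℕ) := ExteriorAlgebra ℝ (Fin (2*n) → ℝ)

/-- The fermionic generator x`_i. -/
def fgen (n : ℕ) (i : Fin (2*n)) : Grass n :=
  ExteriorAlgebra.ι ℝ (Pi.single i (1:ℝ))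

/-- The fermionic partial derivative ∂_{x`_i}, the odd derivation with
∂_{x`_i}(x`_j) = δ_{ij}: contraction with the i-th dual basis vector. -/
def fpderiv (n : ℕ) (i : Fin (2*n)) : Grass n →ₗ[ℝ] Grass n :=
  CliffordAlgebra.contractLeft (LinearMap.proj i)

/-- The fermionic Laplace operator Δ_f = 4∑_j ∂_{x`_{2j−1}}∂_{x`_{2j}}. -/
def lapF (n : ℕ) : Grass n →ₗ[ℝ] Grass n :=
  (4:ℝ) • ∑ j : Fin n,
    (fpderiv n ⟨2*j.1, by omega⟩) ∘ₗ (fpderiv n ⟨2*j.1+1, by omega⟩)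

/-- x`² = ∑_{j=1}^n x`_{2j−1} x`_{2j}. -/
def rf2 (n : ℕ) : Grass n := ∑ j : Fin n, fgen n ⟨2*j.1, by omega⟩ * fgen n ⟨2*j.1+1, by omega⟩

/-- The degree-`k` homogeneous part 𝒫^f_k of the Grassmann algebra. -/
def Pf (n : ℕ) (k : ℕ) : Submodule ℝ (Grass n) :=
  (LinearMap.range (ExteriorAlgebra.ι ℝ (M := Fin (2*n) → ℝ)))^k

/-- The space ℋ^f_k of fermionic (symplectic) harmonics of degree k. -/
def Hf (n : ℕ) (k : ℕ) : Submodule ℝ (Grass n) :=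
  Pf n k ⊓ LinearMap.ker (lapF n)

namespace DimHf

variable {n : ℕ}

theorem d_mul (i : Fin (2*n)) (v : Fin (2*n) → ℝ) (b : Grass n) :
    fpderiv n i (ExteriorAlgebra.ι ℝ v * b) = v i • b - ExteriorAlgebra.ι ℝ v * fpderiv n i b := by
  exact CliffordAlgebra.contractLeft_ι_mul (Q := (0 : QuadraticForm ℝ (Fin (2*n) → ℝ)))
    (d := LinearMap.proj i) v b

theorem d_X_mul (i j : Fin (2*n)) (b : Grass n) :
    fpderiv n i (fgen n j * b)
      = (if i = j then (1:ℝ) else 0) • b - fgen n j * fpderiv n i b := by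
  rw [fgen, d_mul, Pi.single_apply]

theorem d_one (i : Fin (2*n)) : fpderiv n i (1 : Grass n) = 0 := by
  exact CliffordAlgebra.contractLeft_one (0 : QuadraticForm ℝ (Fin (2*n) → ℝ))
    (LinearMap.proj i)

theorem d_algebraMap (i : Fin (2*n)) (r : ℝ) :
    fpderiv n i (algebraMap ℝ (Grass n) r) = 0 := by
  exact CliffordAlgebra.contractLeft_algebraMap
    (Q := (0 : QuadraticForm ℝ (Fin (2*n) → ℝ))) (d := LinearMap.proj i) r


/-! ### Monomials -/

def eL (n : ℕ) (l : List (Fin (2*n))) : Grass n := (l.map (fgen n)).prod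

def eS (n : ℕ) (s : Finset (Fin (2*n))) : Grass n := eL n (s.sort (· ≤ ·))

@[simp] theorem eL_nil : eL n ([] : List (Fin (2*n))) = 1 := rfl

@[simp] theorem eL_cons (i : Fin (2*n)) (l : List (Fin (2*n))) :
    eL n (i :: l) = fgen n i * eL n l := by simp [eL]

@[simp] theorem eS_empty : eS n (∅ : Finset (Fin (2*n))) = 1 := by
  rw [eS, Finset.sort_empty]; rfl

theorem eS_insert_min {a : Fin (2*n)} {s : Finset (Fin (2*n))}
    (h : ∀ b ∈ s, a ≤ b) (ha : a ∉ s) :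
    eS n (insert a s) = fgen n a * eS n s := by
  rw [eS, Finset.sort_insert _ h ha, eS, eL_cons]

theorem eS_min_cons {s : Finset (Fin (2*n))} (hs : s.Nonempty) :
    eS n s = fgen n (s.min' hs) * eS n (s.erase (s.min' hs)) := by
  conv_lhs => rw [← Finset.insert_erase (s.min'_mem hs)]
  exact eS_insert_min (fun b hb => s.min'_le b (Finset.mem_of_mem_erase hb))
    (Finset.notMem_erase _ _)

theorem d_eL_not_mem {i : Fin (2*n)} {l : List (Fin (2*n))} (h : i ∉ l) :
    fpderiv n i (eL n l) = 0 := by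
  induction l with
  | nil => simpa using d_one i
  | cons j l ih =>
    have hij : ¬ (i = j) := by rintro rfl; exact h List.mem_cons_self
    rw [eL_cons, d_X_mul, if_neg hij, ih (fun hl => h (List.mem_cons_of_mem _ hl))]
    simp

theorem d_eS_not_mem {i : Fin (2*n)} {s : Finset (Fin (2*n))} (h : i ∉ s) :
    fpderiv n i (eS n s) = 0 :=
  d_eL_not_mem (by rwa [Finset.mem_sort])

/-- count of elements of `s` below `i` -/
def cnt (s : Finset (Fin (2*n))) (i : Fin (2*n)) : ℕ := (s.filter (· < i)).card

theorem cnt_min {s : Finset (Fin (2*n))} (hs : s.Nonempty) :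
    cnt s (s.min' hs) = 0 := by
  rw [cnt, Finset.card_eq_zero, Finset.filter_eq_empty_iff]
  intro b hb
  simp only [not_lt]
  exact s.min'_le b hb

theorem cnt_erase_min {s : Finset (Fin (2*n))} (hs : s.Nonempty) {i : Fin (2*n)}
    (hi : s.min' hs < i) :
    cnt s i = cnt (s.erase (s.min' hs)) i + 1 := by
  rw [cnt, cnt]
  have h1 : s.filter (· < i) = insert (s.min' hs) ((s.erase (s.min' hs)).filter (· < i)) := by
    rw [Finset.filter_erase, Finset.insert_erase]
    exact Finset.mem_filter.2 ⟨s.min'_mem hs, hi⟩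
  rw [h1, Finset.card_insert_of_notMem]
  intro hmem
  exact (Finset.notMem_erase _ _) (Finset.mem_of_mem_filter _ hmem)

theorem d_eS (i : Fin (2*n)) (s : Finset (Fin (2*n))) :
    fpderiv n i (eS n s) =
      if i ∈ s then ((-1:ℝ))^(cnt s i) • eS n (s.erase i) else 0 := by
  induction s using Finset.strongInduction with
  | _ s ih =>
    by_cases hi : i ∈ s
    · rw [if_pos hi]
      have hs : s.Nonempty := ⟨i, hi⟩
      rw [eS_min_cons hs, d_X_mul]
      by_cases hia : i = s.min' hs
      · rw [if_pos hia]
        rw [show s.erase (s.min' hs) = s.erase i by rw [hia]]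
        rw [d_eS_not_mem (Finset.notMem_erase i s)]
        rw [show cnt s i = 0 by rw [hia]; exact cnt_min hs]
        simp
      · rw [if_neg hia]
        have hie : i ∈ s.erase (s.min' hs) := Finset.mem_erase.2 ⟨hia, hi⟩
        rw [ih (s.erase (s.min' hs)) (Finset.erase_ssubset (s.min'_mem hs)), if_pos hie]
        have hai : s.min' hs < i := lt_of_le_of_ne (s.min'_le i hi) (fun h => hia h.symm)
        have hane : s.min' hs ∉ (s.erase (s.min' hs)).erase i := fun h =>
          (Finset.notMem_erase _ _) (Finset.mem_of_mem_erase h)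
        have hle : ∀ b ∈ (s.erase (s.min' hs)).erase i, s.min' hs ≤ b := fun b hb =>
          s.min'_le b (Finset.mem_of_mem_erase (Finset.mem_of_mem_erase hb))
        have hswap : insert (s.min' hs) ((s.erase (s.min' hs)).erase i) = s.erase i := by
          rw [Finset.erase_right_comm, Finset.insert_erase]
          exact Finset.mem_erase.2 ⟨fun h => hia h.symm, s.min'_mem hs⟩
        rw [mul_smul_comm, ← eS_insert_min hle hane, hswap, cnt_erase_min hs hai]
        rw [pow_succ]
        ring_nf
        simp
    · rw [if_neg hi, d_eS_not_mem hi]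

theorem X_mul_eS (i : Fin (2*n)) (s : Finset (Fin (2*n))) :
    fgen n i * eS n s =
      if i ∈ s then 0 else ((-1:ℝ))^(cnt s i) • eS n (insert i s) := by
  induction s using Finset.strongInduction with
  | _ s ih =>
    rcases s.eq_empty_or_nonempty with rfl | hs
    · rw [if_neg (Finset.notMem_empty i)]
      rw [show cnt (∅ : Finset (Fin (2*n))) i = 0 by simp [cnt], eS_empty, mul_one,
        pow_zero, one_smul, eS_insert_min (by simp) (Finset.notMem_empty i), eS_empty, mul_one]
    · rw [eS_min_cons hs]
      by_cases hia : i = s.min' hs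
      · have h0 : fgen n i * fgen n i = 0 := ExteriorAlgebra.ι_sq_zero _
        rw [if_pos (by rw [hia]; exact s.min'_mem hs), ← mul_assoc, ← hia, h0, zero_mul]
      · rcases lt_or_gt_of_ne hia with hlt | hgt
        · -- i < min s, so i ∉ s
          have hins : i ∉ s := fun h => absurd (s.min'_le i h) (not_le.2 hlt)
          rw [if_neg hins, ← eS_min_cons hs]
          have hc : cnt s i = 0 := by
            rw [cnt, Finset.card_eq_zero, Finset.filter_eq_empty_iff]
            intro b hb
            simp only [not_lt]
            exact le_of_lt (lt_of_lt_of_le hlt (s.min'_le b hb))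
          rw [hc, pow_zero, one_smul, eS_insert_min (fun b hb => le_of_lt
            (lt_of_lt_of_le hlt (s.min'_le b hb))) hins]
        · -- min s < i
          have hmin : s.min' hs ∉ s.erase (s.min' hs) := Finset.notMem_erase _ _
          rw [← mul_assoc,
            show fgen n i * fgen n (s.min' hs) = -(fgen n (s.min' hs) * fgen n i) from
              eq_neg_of_add_eq_zero_left (ExteriorAlgebra.ι_add_mul_swap _ _),
            neg_mul, mul_assoc,
            ih (s.erase (s.min' hs)) (Finset.erase_ssubset (s.min'_mem hs))]
          by_cases his : i ∈ s
          · have : i ∈ s.erase (s.min' hs) := Finset.mem_erase.2 ⟨hia, his⟩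
            rw [if_pos this, if_pos his, mul_zero, neg_zero]
          · have hies : i ∉ s.erase (s.min' hs) := fun h => his (Finset.mem_of_mem_erase h)
            rw [if_neg hies, if_neg his]
            have hane : s.min' hs ∉ insert i (s.erase (s.min' hs)) := by
              rw [Finset.mem_insert]
              rintro (h | h)
              · exact hia h.symm
              · exact hmin h
            have hle : ∀ b ∈ insert i (s.erase (s.min' hs)), s.min' hs ≤ b := by
              intro b hb
              rcases Finset.mem_insert.1 hb with rfl | hb
              · exact le_of_lt hgt
              · exact s.min'_le b (Finset.mem_of_mem_erase hb)
            have hswap : insert (s.min' hs) (insert i (s.erase (s.min' hs))) = insert i s := by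
              rw [Finset.insert_comm, Finset.insert_erase (s.min'_mem hs)]
            rw [mul_smul_comm, ← eS_insert_min hle hane, hswap, cnt_erase_min hs hgt]
            rw [pow_succ]
            ring_nf
            simp

/-! ### Spanning -/

theorem eS_singleton (i : Fin (2*n)) : eS n {i} = fgen n i := by
  rw [show ({i} : Finset (Fin (2*n))) = insert i ∅ from rfl,
    eS_insert_min (by simp) (Finset.notMem_empty i), eS_empty, mul_one]

theorem iota_sum (v : Fin (2*n) → ℝ) :
    ExteriorAlgebra.ι ℝ v = ∑ i, v i • fgen n i := by
  have h : v = ∑ i, Pi.single i (v i) := (Finset.univ_sum_single v).symm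
  conv_lhs => rw [h]
  rw [map_sum]
  refine Finset.sum_congr rfl (fun i _ => ?_)
  rw [fgen, ← map_smul]
  congr 1
  rw [← Pi.single_smul, smul_eq_mul, mul_one]

/-- the set of monomials of degree `k` -/
def ES (n k : ℕ) : Set (Grass n) := eS n '' {s : Finset (Fin (2*n)) | s.card = k}

theorem X_mul_mem_span (i : Fin (2*n)) {k : ℕ} {y : Grass n}
    (hy : y ∈ Submodule.span ℝ (ES n k)) :
    fgen n i * y ∈ Submodule.span ℝ (ES n (k+1)) := by
  induction hy using Submodule.span_induction with
  | mem x hx =>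
    obtain ⟨s, hs, rfl⟩ := hx
    rw [X_mul_eS]
    by_cases hi : i ∈ s
    · rw [if_pos hi]; exact zero_mem _
    · rw [if_neg hi]
      exact Submodule.smul_mem _ _ (Submodule.subset_span
        ⟨insert i s, by
          rw [Set.mem_setOf_eq] at hs ⊢
          simp [Finset.card_insert_of_notMem hi, hs], rfl⟩)
  | zero => rw [mul_zero]; exact zero_mem _
  | add x y _ _ hx hy => rw [mul_add]; exact add_mem hx hy
  | smul c x _ hx => rw [mul_smul_comm]; exact Submodule.smul_mem _ _ hx

theorem Pf_le_span (k : ℕ) : Pf n k ≤ Submodule.span ℝ (ES n k) := by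
  intro x hx
  induction hx using Submodule.pow_induction_on_left' with
  | algebraMap r =>
    have : algebraMap ℝ (Grass n) r = r • eS n ∅ := by
      rw [eS_empty, Algebra.algebraMap_eq_smul_one]
    rw [this]
    exact Submodule.smul_mem _ _ (Submodule.subset_span ⟨∅, by simp, rfl⟩)
  | add x y i hx hy ihx ihy => exact add_mem ihx ihy
  | mem_mul m hm i x hx ih =>
    obtain ⟨v, rfl⟩ := hm
    rw [iota_sum, Finset.sum_mul]
    exact Submodule.sum_mem _ fun j _ => by
      rw [smul_mul_assoc]
      exact Submodule.smul_mem _ _ (X_mul_mem_span j ih)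

theorem eL_mem_Pf (l : List (Fin (2*n))) : eL n l ∈ Pf n l.length := by
  induction l with
  | nil =>
    rw [eL_nil, Pf, List.length_nil, pow_zero]
    exact Submodule.mem_one.2 ⟨1, map_one _⟩
  | cons i l ih =>
    rw [eL_cons, Pf, List.length_cons, pow_succ']
    exact Submodule.mul_mem_mul ⟨Pi.single i 1, rfl⟩ ih

theorem eS_mem_Pf (s : Finset (Fin (2*n))) : eS n s ∈ Pf n s.card := by
  have h := eL_mem_Pf (n := n) (s.sort (· ≤ ·))
  rw [Finset.length_sort] at h
  rw [eS]
  exact h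

theorem Pf_eq_span (k : ℕ) : Pf n k = Submodule.span ℝ (ES n k) := by
  refine le_antisymm (Pf_le_span k) ?_
  rw [Submodule.span_le]
  rintro x ⟨s, hs, rfl⟩
  have := eS_mem_Pf (n := n) s
  rwa [hs] at this

theorem Pf_eq_bot {k : ℕ} (hk : 2*n < k) : Pf n k = ⊥ := by
  rw [Pf_eq_span]
  have : ES n k = ∅ := by
    rw [ES, Set.image_eq_empty]
    ext s
    simp only [Set.mem_setOf_eq, Set.mem_empty_iff_false, iff_false]
    intro h
    have hcs : s.card ≤ 2*n := by simpa using Finset.card_le_univ s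
    omega
  rw [this, Submodule.span_empty]

/-! ### Independence -/

def Dop (n : ℕ) : List (Fin (2*n)) → (Grass n →ₗ[ℝ] Grass n)
  | [] => LinearMap.id
  | i :: l => (Dop n l).comp (fpderiv n i)

theorem sort_min_cons {s : Finset (Fin (2*n))} (hs : s.Nonempty) :
    s.sort (· ≤ ·) = s.min' hs :: (s.erase (s.min' hs)).sort (· ≤ ·) := by
  conv_lhs => rw [← Finset.insert_erase (s.min'_mem hs)]
  exact Finset.sort_insert _ (fun b hb => s.min'_le b (Finset.mem_of_mem_erase hb))
    (Finset.notMem_erase _ _)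

theorem Dop_eS (s : Finset (Fin (2*n))) : ∀ t : Finset (Fin (2*n)),
    (s ⊆ t → ∃ c : ℝ, c ≠ 0 ∧ Dop n (s.sort (· ≤ ·)) (eS n t) = c • eS n (t \ s)) ∧
    (¬ s ⊆ t → Dop n (s.sort (· ≤ ·)) (eS n t) = 0) := by
  induction s using Finset.strongInduction with
  | _ s ih =>
    intro t
    rcases s.eq_empty_or_nonempty with rfl | hs
    · constructor
      · intro _
        exact ⟨1, one_ne_zero, by rw [Finset.sort_empty]; simp [Dop]⟩
      · intro h
        exact absurd (Finset.empty_subset t) h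
    · set a := s.min' hs with ha
      have hmem : a ∈ s := s.min'_mem hs
      have hrec : Dop n (s.sort (· ≤ ·)) = (Dop n ((s.erase a).sort (· ≤ ·))).comp
          (fpderiv n a) := by rw [sort_min_cons hs]; rfl
      have hss : s.erase a ⊂ s := Finset.erase_ssubset hmem
      constructor
      · intro hst
        have hat : a ∈ t := hst hmem
        obtain ⟨c, hc, hD⟩ := (ih _ hss (t.erase a)).1
          (fun x hx => Finset.mem_erase.2
            ⟨fun h => (Finset.mem_erase.1 hx).1 h, hst (Finset.mem_of_mem_erase hx)⟩)
        refine ⟨((-1:ℝ))^(cnt t a) * c, by simp [hc], ?_⟩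
        rw [hrec, LinearMap.comp_apply, d_eS, if_pos hat, map_smul, hD]
        rw [show (t.erase a) \ (s.erase a) = t \ s by
          ext x
          simp only [Finset.mem_sdiff, Finset.mem_erase]
          constructor
          · rintro ⟨⟨hxa, hxt⟩, hxs⟩
            exact ⟨hxt, fun h => hxs ⟨hxa, h⟩⟩
          · rintro ⟨hxt, hxs⟩
            refine ⟨⟨fun h => hxs (h ▸ hmem), hxt⟩, fun h => hxs h.2⟩]
        rw [smul_smul]
      · intro hst
        by_cases hat : a ∈ t
        · have : ¬ s.erase a ⊆ t.erase a := by
            intro h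
            apply hst
            intro x hx
            by_cases hxa : x = a
            · exact hxa ▸ hat
            · exact Finset.mem_of_mem_erase (h (Finset.mem_erase.2 ⟨hxa, hx⟩))
          rw [hrec, LinearMap.comp_apply, d_eS, if_pos hat, map_smul,
            (ih _ hss (t.erase a)).2 this, smul_zero]
        · rw [hrec, LinearMap.comp_apply, d_eS, if_neg hat, map_zero]

theorem eS_linearIndependent :
    LinearIndependent ℝ (fun s : Finset (Fin (2*n)) => eS n s) := by
  rw [Fintype.linearIndependent_iff]
  intro g hg
  suffices h : ∀ j (s : Finset (Fin (2*n))), 2*n + 1 - s.card ≤ j → g s = 0 by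
    intro s; exact h (2*n+1) s (by omega)
  intro j
  induction j with
  | zero =>
    intro s hs
    exfalso
    have hcs : s.card ≤ 2*n := by simpa using Finset.card_le_univ s
    omega
  | succ j ihj =>
    intro s hs
    have happ := congrArg (Dop n (s.sort (· ≤ ·))) hg
    rw [map_sum, map_zero] at happ
    obtain ⟨c, hc, hD⟩ := (Dop_eS s s).1 (subset_refl s)
    rw [Finset.sum_eq_single s] at happ
    · rw [map_smul, hD, Finset.sdiff_self, eS_empty, smul_smul] at happ
      have h1 : (1 : Grass n) ≠ 0 := one_ne_zero
      have := smul_eq_zero.1 happ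
      rcases this with h | h
      · exact (mul_eq_zero.1 h).resolve_right hc
      · exact absurd h h1
    · intro t _ hts
      rw [map_smul]
      by_cases hsub : s ⊆ t
      · have hcard : s.card < t.card := Finset.card_lt_card (lt_of_le_of_ne hsub
          (fun h => hts h.symm))
        rw [ihj t (by omega), zero_smul]
      · rw [(Dop_eS s t).2 hsub, smul_zero]
    · intro h
      exact absurd (Finset.mem_univ s) h

/-! ### Basis and dimensions -/

theorem top_le_span_eS :
    ⊤ ≤ Submodule.span ℝ (Set.range (fun s : Finset (Fin (2*n)) => eS n s)) := by
  have hXmul : ∀ (i : Fin (2*n)) y, y ∈ Submodule.span ℝ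
      (Set.range (fun s : Finset (Fin (2*n)) => eS n s)) →
      fgen n i * y ∈ Submodule.span ℝ (Set.range (fun s : Finset (Fin (2*n)) => eS n s)) := by
    intro i y hy
    induction hy using Submodule.span_induction with
    | mem x hx =>
      obtain ⟨s, rfl⟩ := hx
      rw [X_mul_eS]
      by_cases hi : i ∈ s
      · rw [if_pos hi]; exact zero_mem _
      · rw [if_neg hi]
        exact Submodule.smul_mem _ _ (Submodule.subset_span ⟨insert i s, rfl⟩)
    | zero => rw [mul_zero]; exact zero_mem _
    | add x y _ _ hx hy => rw [mul_add]; exact add_mem hx hy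
    | smul c x _ hx => rw [mul_smul_comm]; exact Submodule.smul_mem _ _ hx
  have hiota : ∀ (v : Fin (2*n) → ℝ) y, y ∈ Submodule.span ℝ
      (Set.range (fun s : Finset (Fin (2*n)) => eS n s)) →
      ExteriorAlgebra.ι ℝ v * y ∈ Submodule.span ℝ
        (Set.range (fun s : Finset (Fin (2*n)) => eS n s)) := by
    intro v y hy
    rw [iota_sum, Finset.sum_mul]
    exact Submodule.sum_mem _ fun j _ => by
      rw [smul_mul_assoc]
      exact Submodule.smul_mem _ _ (hXmul j y hy)
  have heL : ∀ l : List (Fin (2*n)), ∀ y ∈ Submodule.span ℝ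
      (Set.range (fun s : Finset (Fin (2*n)) => eS n s)),
      eL n l * y ∈ Submodule.span ℝ (Set.range (fun s : Finset (Fin (2*n)) => eS n s)) := by
    intro l
    induction l with
    | nil => intro y hy; rwa [eL_nil, one_mul]
    | cons i l ih =>
      intro y hy
      rw [eL_cons, mul_assoc]
      exact hXmul i _ (ih y hy)
  intro x hx
  clear hx
  induction x using CliffordAlgebra.induction with
  | algebraMap r =>
    rw [show algebraMap ℝ (Grass n) r = r • eS n ∅ by
      rw [eS_empty, Algebra.algebraMap_eq_smul_one]]
    exact Submodule.smul_mem _ _ (Submodule.subset_span ⟨∅, rfl⟩)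
  | ι v =>
    have h1 : (1 : Grass n) ∈ Submodule.span ℝ
        (Set.range (fun s : Finset (Fin (2*n)) => eS n s)) :=
      Submodule.subset_span ⟨∅, by simpa using (eS_empty (n := n))⟩
    have := hiota v 1 h1
    rwa [mul_one] at this
  | mul x y hx hy =>
    induction hx using Submodule.span_induction with
    | mem z hz =>
      obtain ⟨s, rfl⟩ := hz
      exact heL (s.sort (· ≤ ·)) y hy
    | zero => rw [zero_mul]; exact zero_mem _
    | add a b _ _ ha hb => rw [add_mul]; exact add_mem ha hb
    | smul c a _ ha => rw [smul_mul_assoc]; exact Submodule.smul_mem _ _ ha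
  | add x y hx hy => exact add_mem hx hy

def bGr : Module.Basis (Finset (Fin (2*n))) ℝ (Grass n) :=
  Module.Basis.mk eS_linearIndependent top_le_span_eS

theorem bGr_apply (s : Finset (Fin (2*n))) : (bGr (n := n)) s = eS n s := Module.Basis.mk_apply _ _ _

instance : FiniteDimensional ℝ (Grass n) :=
  Module.Finite.of_basis (bGr (n := n))

theorem finrank_Pf (k : ℕ) :
    Module.finrank ℝ (Pf n k) = Nat.choose (2*n) k := by
  have hfam : ES n k = Set.range
      (fun s : {s : Finset (Fin (2*n)) // s.card = k} => eS n s.1) := by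
    ext x
    constructor
    · rintro ⟨s, hs, rfl⟩; exact ⟨⟨s, hs⟩, rfl⟩
    · rintro ⟨⟨s, hs⟩, rfl⟩; exact ⟨s, hs, rfl⟩
  have li : LinearIndependent ℝ (fun s : {s : Finset (Fin (2*n)) // s.card = k} => eS n s.1) :=
    eS_linearIndependent.comp Subtype.val Subtype.val_injective
  rw [Pf_eq_span, hfam, finrank_span_eq_card li]
  rw [show Fintype.card {s : Finset (Fin (2*n)) // s.card = k}
      = (Finset.powersetCard k (Finset.univ : Finset (Fin (2*n)))).card by
    rw [Fintype.card_subtype]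
    congr 1
    ext s
    simp [Finset.mem_powersetCard_univ]]
  rw [Finset.card_powersetCard, Finset.card_univ, Fintype.card_fin]

/-! ### Operators -/

def p0 (n : ℕ) (j : Fin n) : Fin (2*n) := ⟨2*j.1, by omega⟩
def p1 (n : ℕ) (j : Fin n) : Fin (2*n) := ⟨2*j.1+1, by omega⟩

def lam (n : ℕ) : Grass n →ₗ[ℝ] Grass n :=
  ∑ j : Fin n, (fpderiv n (p0 n j)) ∘ₗ (fpderiv n (p1 n j))

def Nop (n : ℕ) : Grass n →ₗ[ℝ] Grass n :=
  ∑ i : Fin (2*n), (LinearMap.mulLeft ℝ (fgen n i)) ∘ₗ (fpderiv n i)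

theorem lapF_eq : lapF n = (4:ℝ) • lam n := rfl

theorem rf2_eq : rf2 n = ∑ j : Fin n, fgen n (p0 n j) * fgen n (p1 n j) := rfl

@[simp] theorem p0_eq_p0 {j l : Fin n} : p0 n j = p0 n l ↔ j = l := by
  rw [p0, p0, Fin.mk.injEq, Fin.ext_iff]; omega

@[simp] theorem p1_eq_p1 {j l : Fin n} : p1 n j = p1 n l ↔ j = l := by
  rw [p1, p1, Fin.mk.injEq, Fin.ext_iff]; omega

@[simp] theorem p0_ne_p1 {j l : Fin n} : ¬ (p0 n j = p1 n l) := by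
  rw [p0, p1, Fin.mk.injEq]; omega

@[simp] theorem p1_ne_p0 {j l : Fin n} : ¬ (p1 n j = p0 n l) := by
  rw [p0, p1, Fin.mk.injEq]; omega

theorem lam_apply (x : Grass n) :
    lam n x = ∑ j : Fin n, fpderiv n (p0 n j) (fpderiv n (p1 n j) x) := by
  rw [lam, LinearMap.sum_apply]; rfl

theorem Nop_apply (x : Grass n) :
    Nop n x = ∑ i : Fin (2*n), fgen n i * fpderiv n i x := by
  rw [Nop, LinearMap.sum_apply]; rfl

theorem X_swap (i : Fin (2*n)) (v : Fin (2*n) → ℝ) (w : Grass n) :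
    fgen n i * (ExteriorAlgebra.ι ℝ v * w) = -(ExteriorAlgebra.ι ℝ v * (fgen n i * w)) := by
  have h : fgen n i * ExteriorAlgebra.ι ℝ v = -(ExteriorAlgebra.ι ℝ v * fgen n i) :=
    eq_neg_of_add_eq_zero_left (ExteriorAlgebra.ι_add_mul_swap _ _)
  rw [← mul_assoc, h, neg_mul, mul_assoc]

theorem Nop_iota_mul (v : Fin (2*n) → ℝ) (x : Grass n) :
    Nop n (ExteriorAlgebra.ι ℝ v * x)
      = ExteriorAlgebra.ι ℝ v * x + ExteriorAlgebra.ι ℝ v * Nop n x := by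
  rw [Nop_apply, Nop_apply]
  have h1 : ∀ i : Fin (2*n), fgen n i * fpderiv n i (ExteriorAlgebra.ι ℝ v * x)
      = v i • (fgen n i * x) + ExteriorAlgebra.ι ℝ v * (fgen n i * fpderiv n i x) := by
    intro i
    rw [d_mul, mul_sub, X_swap, mul_smul_comm]
    abel
  rw [Finset.sum_congr rfl (fun i _ => h1 i), Finset.sum_add_distrib, ← Finset.mul_sum]
  congr 1
  rw [iota_sum, Finset.sum_mul]
  exact Finset.sum_congr rfl (fun i _ => (smul_mul_assoc _ _ _).symm)

theorem Nop_pf {m : ℕ} {x : Grass n} (hx : x ∈ Pf n m) : Nop n x = (m:ℝ) • x := by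
  induction hx using Submodule.pow_induction_on_left' with
  | algebraMap r =>
    rw [Nop_apply]
    rw [Finset.sum_eq_zero (fun i _ => by rw [d_algebraMap, mul_zero])]
    simp
  | add x y i hx hy ihx ihy =>
    rw [map_add, ihx, ihy, smul_add]
  | mem_mul mm hm i x hx ih =>
    obtain ⟨v, rfl⟩ := hm
    rw [Nop_iota_mul, ih, mul_smul_comm]
    push_cast
    rw [add_smul, one_smul]
    abel

/-! reindexing -/

theorem sum_range_pair {β : Type*} [AddCommMonoid β] (g : ℕ → β) (m : ℕ) :
    ∑ i ∈ Finset.range (2*m), g i = ∑ j ∈ Finset.range m, (g (2*j) + g (2*j+1)) := by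
  induction m with
  | zero => simp
  | succ m ih =>
    rw [show 2*(m+1) = 2*m+1+1 by omega, Finset.sum_range_succ, Finset.sum_range_succ,
      Finset.sum_range_succ, ih, show 2*m+1 = 2*m+1 from rfl]
    abel

theorem sum_pair {β : Type*} [AddCommMonoid β] (f : Fin (2*n) → β) :
    ∑ i, f i = ∑ j : Fin n, (f (p0 n j) + f (p1 n j)) := by
  classical
  set g : ℕ → β := fun i => if h : i < 2*n then f ⟨i, h⟩ else 0 with hg
  have h1 : ∑ i, f i = ∑ i ∈ Finset.range (2*n), g i := by
    rw [← Fin.sum_univ_eq_sum_range]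
    exact Finset.sum_congr rfl (fun i _ => by rw [hg]; simp [i.isLt])
  have h2 : ∑ j : Fin n, (f (p0 n j) + f (p1 n j))
      = ∑ j ∈ Finset.range n, (g (2*j) + g (2*j+1)) := by
    rw [← Fin.sum_univ_eq_sum_range (fun j => g (2*j) + g (2*j+1)) n]
    refine Finset.sum_congr rfl (fun j _ => ?_)
    have hj0 : 2*j.1 < 2*n := by omega
    have hj1 : 2*j.1+1 < 2*n := by omega
    rw [hg]
    simp only [hj0, hj1, dif_pos]
    rfl
  rw [h1, h2, sum_range_pair]

/-! the key commutation computation -/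

theorem dd_pair_mul (j l : Fin n) (x : Grass n) :
    fpderiv n (p0 n j) (fpderiv n (p1 n j) (fgen n (p0 n l) * (fgen n (p1 n l) * x)))
      = fgen n (p0 n l) * (fgen n (p1 n l) * fpderiv n (p0 n j) (fpderiv n (p1 n j) x))
        + (if j = l then
            (- x + fgen n (p0 n j) * fpderiv n (p0 n j) x
              + fgen n (p1 n j) * fpderiv n (p1 n j) x)
           else 0) := by
  by_cases h : j = l
  · subst h
    rw [if_pos rfl]
    simp [d_X_mul, map_sub, map_smul, mul_sub, mul_smul_comm, smul_sub]
    abel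
  · rw [if_neg h]
    have h0 : ¬ (p0 n j = p0 n l) := fun hh => h (p0_eq_p0.1 hh)
    have h1 : ¬ (p1 n j = p1 n l) := fun hh => h (p1_eq_p1.1 hh)
    simp [d_X_mul, map_sub, map_smul, mul_sub, mul_smul_comm, smul_sub, h0, h1]

theorem lam_rf2_mul (x : Grass n) :
    lam n (rf2 n * x) = rf2 n * lam n x - (n:ℝ) • x + Nop n x := by
  have hrf : ∀ y : Grass n, rf2 n * y = ∑ l : Fin n, fgen n (p0 n l) * (fgen n (p1 n l) * y) := by
    intro y
    rw [rf2_eq, Finset.sum_mul]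
    exact Finset.sum_congr rfl (fun l _ => mul_assoc _ _ _)
  rw [lam_apply, hrf x]
  have hterm : ∀ j : Fin n,
      fpderiv n (p0 n j) (fpderiv n (p1 n j)
        (∑ l : Fin n, fgen n (p0 n l) * (fgen n (p1 n l) * x)))
      = rf2 n * (fpderiv n (p0 n j) (fpderiv n (p1 n j) x))
        + (- x + fgen n (p0 n j) * fpderiv n (p0 n j) x
            + fgen n (p1 n j) * fpderiv n (p1 n j) x) := by
    intro j
    rw [map_sum, map_sum, Finset.sum_congr rfl (fun l _ => dd_pair_mul j l x),
      Finset.sum_add_distrib, Finset.sum_ite_eq (Finset.univ : Finset (Fin n)) j,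
      if_pos (Finset.mem_univ j), hrf]
  rw [Finset.sum_congr rfl (fun j _ => hterm j), Finset.sum_add_distrib]
  have hA : ∑ j : Fin n, rf2 n * fpderiv n (p0 n j) (fpderiv n (p1 n j) x)
      = rf2 n * lam n x := by
    rw [lam_apply, Finset.mul_sum]
  have hB : ∑ j : Fin n, (- x + fgen n (p0 n j) * fpderiv n (p0 n j) x
      + fgen n (p1 n j) * fpderiv n (p1 n j) x)
      = - ((n:ℝ) • x) + Nop n x := by
    rw [Finset.sum_add_distrib, Finset.sum_add_distrib, Finset.sum_neg_distrib,
      Finset.sum_const, Finset.card_univ, Fintype.card_fin]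
    rw [Nop_apply, sum_pair (fun i => fgen n i * fpderiv n i x)]
    rw [show (n : ℕ) • x = (n:ℝ) • x by rw [Nat.cast_smul_eq_nsmul ℝ]]
    rw [Finset.sum_add_distrib]
    abel
  rw [hA, hB]
  abel

/-! membership lemmas -/

theorem d_pf0 {x : Grass n} (hx : x ∈ Pf n 0) (i : Fin (2*n)) : fpderiv n i x = 0 := by
  rw [Pf, pow_zero] at hx
  obtain ⟨r, rfl⟩ := Submodule.mem_one.1 hx
  exact d_algebraMap i r

theorem d_pf {m : ℕ} {x : Grass n} (hx : x ∈ Pf n m) (i : Fin (2*n)) :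
    fpderiv n i x ∈ Pf n (m-1) := by
  have key : ∀ {k : ℕ} {y : Grass n}, y ∈ Pf n k →
      fpderiv n i y ∈ Pf n (k-1) ∧ (k = 0 → fpderiv n i y = 0) := by
    intro k y hy
    induction hy using Submodule.pow_induction_on_left' with
    | algebraMap r => exact ⟨by rw [d_algebraMap]; exact zero_mem _,
        fun _ => d_algebraMap i r⟩
    | add a b k ha hb iha ihb =>
      refine ⟨by rw [map_add]; exact add_mem iha.1 ihb.1, fun hk => ?_⟩
      rw [map_add, iha.2 hk, ihb.2 hk, add_zero]
    | mem_mul mm hm k a ha ih =>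
      obtain ⟨v, rfl⟩ := hm
      constructor
      · rw [d_mul]
        refine sub_mem (Submodule.smul_mem _ _ ?_) ?_
        · rw [Nat.succ_sub_one]; exact ha
        · rcases Nat.eq_zero_or_pos k with rfl | hk
          · rw [ih.2 rfl, mul_zero]; exact zero_mem _
          · have h1 : ExteriorAlgebra.ι ℝ v * fpderiv n i a ∈
                Pf n (1 + (k-1)) := by
              rw [Pf, pow_add, pow_one]
              exact Submodule.mul_mem_mul ⟨v, rfl⟩ ih.1
            rwa [show 1 + (k-1) = k.succ - 1 by omega] at h1
      · intro h; omega
  exact (key hx).1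

theorem lam_pf {m : ℕ} {x : Grass n} (hx : x ∈ Pf n m) : lam n x ∈ Pf n (m-2) := by
  rw [lam_apply]
  refine Submodule.sum_mem _ (fun j _ => ?_)
  have h := d_pf (d_pf hx (p1 n j)) (p0 n j)
  rwa [show m - 1 - 1 = m - 2 by omega] at h

theorem lam_pf_low {m : ℕ} (hm : m ≤ 1) {x : Grass n} (hx : x ∈ Pf n m) : lam n x = 0 := by
  rw [lam_apply]
  refine Finset.sum_eq_zero (fun j _ => ?_)
  have h1 : fpderiv n (p1 n j) x ∈ Pf n 0 := by
    have := d_pf hx (p1 n j)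
    rwa [show m - 1 = 0 by omega] at this
  exact d_pf0 h1 _

theorem rf2_mem : rf2 n ∈ Pf n 2 := by
  rw [rf2_eq, Pf]
  refine Submodule.sum_mem _ (fun j _ => ?_)
  rw [pow_two]
  exact Submodule.mul_mem_mul ⟨_, rfl⟩ ⟨_, rfl⟩

theorem rf2_mul_pf {m : ℕ} {x : Grass n} (hx : x ∈ Pf n m) : rf2 n * x ∈ Pf n (m+2) := by
  have h := Submodule.mul_mem_mul (rf2_mem (n := n)) hx
  rw [Pf, show m + 2 = 2 + m by omega, pow_add]
  exact h

theorem comm' {m : ℕ} {x : Grass n} (hx : x ∈ Pf n m) :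
    lam n (rf2 n * x) = rf2 n * lam n x + ((m:ℝ) - n) • x := by
  rw [lam_rf2_mul, Nop_pf hx, sub_smul]
  abel

/-! ### sl2 chains -/

theorem rf2_pow_mul_pf {m : ℕ} {x : Grass n} (hx : x ∈ Pf n m) (k : ℕ) :
    rf2 n ^ k * x ∈ Pf n (m + 2*k) := by
  induction k with
  | zero => rw [pow_zero, one_mul]; simpa using hx
  | succ k ih =>
    have h := rf2_mul_pf ih
    rw [← mul_assoc, ← pow_succ'] at h
    rwa [show m + 2*k + 2 = m + 2*(k+1) by omega] at h

theorem lam_pow_pf {m : ℕ} {x : Grass n} (hx : x ∈ Pf n m) (k : ℕ) :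
    ((lam n)^k) x ∈ Pf n (m - 2*k) := by
  induction k generalizing m x with
  | zero => rw [pow_zero]; simpa using hx
  | succ k ih =>
    rw [pow_succ, Module.End.mul_apply]
    have h := ih (lam_pf hx)
    rwa [show m - 2 - 2*k = m - 2*(k+1) by omega] at h

theorem lam_pow_zero {m : ℕ} {x : Grass n} (hx : x ∈ Pf n m) {K : ℕ} (h : m < 2*K) :
    ((lam n)^K) x = 0 := by
  induction K generalizing m x with
  | zero => omega
  | succ K ih =>
    rw [pow_succ, Module.End.mul_apply]
    rcases le_or_gt m 1 with hm | hm
    · rw [lam_pf_low hm hx, map_zero]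
    · exact ih (lam_pf hx) (by omega)

theorem high_ker {m : ℕ} (hm : n < m) {x : Grass n} (hx : x ∈ Pf n m)
    (hlam : lam n x = 0) : x = 0 := by
  have St : ∀ k : ℕ, lam n (rf2 n ^ k * x)
      = ((k:ℝ)*((k:ℝ)-1+((m:ℝ)-(n:ℝ)))) • (rf2 n ^ (k-1) * x) := by
    intro k
    induction k with
    | zero => simp [hlam]
    | succ k ih =>
      have hmem : rf2 n ^ k * x ∈ Pf n (m + 2*k) := rf2_pow_mul_pf hx k
      have h1 : lam n (rf2 n ^ (k+1) * x) = rf2 n * lam n (rf2 n ^ k * x)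
          + (((m + 2*k : ℕ):ℝ) - (n:ℝ)) • (rf2 n ^ k * x) := by
        rw [pow_succ', mul_assoc]
        exact comm' hmem
      rw [h1, ih, mul_smul_comm]
      rcases Nat.eq_zero_or_pos k with rfl | hk
      · simp only [Nat.cast_zero, zero_mul, zero_smul, zero_add, Nat.add_sub_cancel,
          Nat.sub_self, pow_zero, one_mul, Nat.mul_zero, Nat.add_zero, smul_zero]
        congr 1
        push_cast
        ring
      · have hps : rf2 n * (rf2 n ^ (k-1) * x) = rf2 n ^ k * x := by
          rw [← mul_assoc, ← pow_succ']
          congr 2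
          omega
        rw [hps, ← add_smul]
        rw [Nat.add_sub_cancel]
        congr 1
        push_cast
        ring
  have hvan : rf2 n ^ (n+1) * x = 0 := by
    have h := rf2_pow_mul_pf hx (n+1)
    rw [Pf_eq_bot (by omega)] at h
    simpa using h
  have desc : ∀ t : ℕ, rf2 n ^ (n+1-t) * x = 0 := by
    intro t
    induction t with
    | zero => simpa using hvan
    | succ t ih =>
      rcases le_or_gt (n+1) t with h | h
      · rw [show n+1-(t+1) = 0 by omega]
        rw [show n+1-t = 0 by omega] at ih
        exact ih
      · have hSt := St (n+1-t)
        rw [ih, map_zero] at hSt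
        have hc : ((n+1-t:ℕ):ℝ)*(((n+1-t:ℕ):ℝ)-1+((m:ℝ)-(n:ℝ))) ≠ 0 := by
          have h1 : (1:ℝ) ≤ ((n+1-t:ℕ):ℝ) := by
            have : 1 ≤ n+1-t := by omega
            exact_mod_cast this
          have h2 : (1:ℝ) ≤ (m:ℝ)-(n:ℝ) := by
            have : (n:ℝ) + 1 ≤ (m:ℝ) := by exact_mod_cast hm
            linarith
          nlinarith
        rcases smul_eq_zero.1 hSt.symm with h' | h'
        · exact absurd h' hc
        · rw [show n+1-(t+1) = (n+1-t)-1 by omega]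
          exact h'
  have h := desc (n+1)
  simpa using h

theorem L_inj_low {m : ℕ} (hm : m < n) {x : Grass n} (hx : x ∈ Pf n m)
    (h0 : rf2 n * x = 0) : x = 0 := by
  have St2 : ∀ k : ℕ, 1 ≤ k → 2*(k-1) ≤ m →
      rf2 n * (((lam n)^k) x)
        = ((k:ℝ)*(((n:ℝ)-(m:ℝ))+(k:ℝ)-1)) • (((lam n)^(k-1)) x) := by
    intro k
    induction k with
    | zero => intro h; omega
    | succ k ih =>
      intro _ hle
      rcases Nat.eq_zero_or_pos k with rfl | hk
      · have h := comm' hx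
        rw [h0, map_zero] at h
        have h' : rf2 n * lam n x = ((n:ℝ)-(m:ℝ)) • x := by
          have ha := eq_neg_of_add_eq_zero_left h.symm
          rw [ha, ← neg_smul]
          congr 1
          ring
        simp only [zero_add, pow_one, Nat.sub_self, pow_zero, Module.End.one_apply]
        rw [h']
        congr 1
        push_cast
        ring
      · have hmem : ((lam n)^k) x ∈ Pf n (m - 2*k) := lam_pow_pf hx k
        have hc := comm' hmem
        rw [show lam n (((lam n)^k) x) = ((lam n)^(k+1)) x by
          rw [pow_succ', Module.End.mul_apply]] at hc
        rw [ih hk (by omega)] at hc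
        have hlamstep : lam n ((((k:ℝ)*(((n:ℝ)-(m:ℝ))+(k:ℝ)-1))) • (((lam n)^(k-1)) x))
            = ((k:ℝ)*(((n:ℝ)-(m:ℝ))+(k:ℝ)-1)) • (((lam n)^k) x) := by
          rw [map_smul]
          congr 1
          rw [show ((lam n)^k) x = lam n (((lam n)^(k-1)) x) by
            rw [← Module.End.mul_apply, ← pow_succ']
            congr 2
            omega]
        rw [hlamstep] at hc
        -- hc : c_k • lam^k x = rf2 * lam^{k+1} x + ((m-2k) - n) • lam^k x
        have : rf2 n * (((lam n)^(k+1)) x)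
            = (((k:ℝ)*(((n:ℝ)-(m:ℝ))+(k:ℝ)-1)) - (((m - 2*k:ℕ):ℝ) - (n:ℝ)))
              • (((lam n)^k) x) := by
          rw [sub_smul, hc]
          abel
        rw [this, Nat.add_sub_cancel]
        congr 1
        have hcast : ((m - 2*k:ℕ):ℝ) = (m:ℝ) - 2*(k:ℝ) := by
          have : 2*k ≤ m := by omega
          push_cast [this]
          ring
        rw [hcast]
        push_cast
        ring
  have hvan : ((lam n)^(m/2+1)) x = 0 := lam_pow_zero hx (by omega)
  have desc : ∀ t : ℕ, ((lam n)^(m/2+1-t)) x = 0 := by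
    intro t
    induction t with
    | zero => simpa using hvan
    | succ t ih =>
      rcases le_or_gt (m/2+1) t with h | h
      · rw [show m/2+1-(t+1) = 0 by omega]
        rw [show m/2+1-t = 0 by omega] at ih
        exact ih
      · have hSt := St2 (m/2+1-t) (by omega) (by omega)
        rw [ih, mul_zero] at hSt
        have hc : ((m/2+1-t:ℕ):ℝ)*(((n:ℝ)-(m:ℝ))+((m/2+1-t:ℕ):ℝ)-1) ≠ 0 := by
          have h1 : (1:ℝ) ≤ ((m/2+1-t:ℕ):ℝ) := by
            have : 1 ≤ m/2+1-t := by omega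
            exact_mod_cast this
          have h2 : (1:ℝ) ≤ (n:ℝ)-(m:ℝ) := by
            have : (m:ℝ) + 1 ≤ (n:ℝ) := by exact_mod_cast hm
            linarith
          nlinarith
        rcases smul_eq_zero.1 hSt.symm with h' | h'
        · exact absurd h' hc
        · rw [show m/2+1-(t+1) = (m/2+1-t)-1 by omega]
          exact h'
  have h := desc (m/2+1)
  simpa using h

/-! ### adjointness -/

theorem cnt_pair_d {j : Fin n} {s : Finset (Fin (2*n))} (h0 : p0 n j ∈ s)
    (h1 : p1 n j ∈ s) :
    cnt s (p1 n j) = cnt (s.erase (p1 n j)) (p0 n j) + 1 := by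
  rw [cnt, cnt]
  have key : s.filter (· < p1 n j)
      = insert (p0 n j) ((s.erase (p1 n j)).filter (· < p0 n j)) := by
    ext x
    simp only [Finset.mem_filter, Finset.mem_insert, Finset.mem_erase]
    constructor
    · rintro ⟨hxs, hlt⟩
      by_cases hx : x = p0 n j
      · exact Or.inl hx
      · refine Or.inr ⟨⟨?_, hxs⟩, ?_⟩
        · intro hh
          rw [hh] at hlt
          exact lt_irrefl _ hlt
        · have hv : x.1 < 2*j.1+1 := hlt
          have hv2 : x.1 ≠ 2*j.1 := fun hh => hx (Fin.ext hh)
          exact show x.1 < 2*j.1 by omega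
    · rintro (rfl | ⟨⟨hne, hxs⟩, hlt⟩)
      · exact ⟨h0, show 2*j.1 < 2*j.1+1 by omega⟩
      · exact ⟨hxs, lt_trans hlt (show (p0 n j) < (p1 n j) from
          show 2*j.1 < 2*j.1+1 by omega)⟩
  rw [key, Finset.card_insert_of_notMem]
  intro hmem
  exact lt_irrefl _ (Finset.mem_filter.1 hmem).2

theorem cnt_pair_X {j : Fin n} {t : Finset (Fin (2*n))} (h0 : p0 n j ∉ t) :
    cnt t (p1 n j) = cnt (insert (p1 n j) t) (p0 n j) := by
  rw [cnt, cnt]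
  congr 1
  ext x
  simp only [Finset.mem_filter, Finset.mem_insert]
  constructor
  · rintro ⟨hxt, hlt⟩
    have hv : x.1 < 2*j.1+1 := hlt
    have hne : x.1 ≠ 2*j.1 := by
      intro hh
      have hx : x = p0 n j := Fin.ext hh
      rw [hx] at hxt
      exact h0 hxt
    exact ⟨Or.inr hxt, show x.1 < 2*j.1 by omega⟩
  · rintro ⟨(rfl | hxt), hlt⟩
    · exact absurd (show 2*j.1+1 < 2*j.1 from hlt) (by omega)
    · exact ⟨hxt, lt_trans hlt (show 2*j.1 < 2*j.1+1 by omega)⟩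

theorem dd_eS (j : Fin n) (s : Finset (Fin (2*n))) :
    fpderiv n (p0 n j) (fpderiv n (p1 n j) (eS n s))
      = if p0 n j ∈ s ∧ p1 n j ∈ s then -eS n ((s.erase (p1 n j)).erase (p0 n j)) else 0 := by
  rw [d_eS]
  by_cases h1 : p1 n j ∈ s
  · rw [if_pos h1, map_smul, d_eS]
    by_cases h0 : p0 n j ∈ s
    · have h0' : p0 n j ∈ s.erase (p1 n j) :=
        Finset.mem_erase.2 ⟨fun h => p0_ne_p1 h, h0⟩
      rw [if_pos h0', if_pos ⟨h0, h1⟩, smul_smul, ← pow_add, cnt_pair_d h0 h1]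
      have hodd : Odd (cnt (s.erase (p1 n j)) (p0 n j) + 1
          + cnt (s.erase (p1 n j)) (p0 n j)) :=
        ⟨cnt (s.erase (p1 n j)) (p0 n j), by omega⟩
      rw [hodd.neg_one_pow, neg_one_smul]
    · have h0' : p0 n j ∉ s.erase (p1 n j) := fun h => h0 (Finset.mem_of_mem_erase h)
      rw [if_neg h0', smul_zero, if_neg (fun hc => h0 hc.1)]
  · rw [if_neg h1, map_zero, if_neg (fun hc => h1 hc.2)]

theorem XX_eS (j : Fin n) (t : Finset (Fin (2*n))) :
    fgen n (p0 n j) * (fgen n (p1 n j) * eS n t)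
      = if p0 n j ∉ t ∧ p1 n j ∉ t then eS n (insert (p0 n j) (insert (p1 n j) t))
        else 0 := by
  rw [X_mul_eS]
  by_cases h1 : p1 n j ∈ t
  · rw [if_pos h1, mul_zero, if_neg (fun hc => hc.2 h1)]
  · rw [if_neg h1, mul_smul_comm, X_mul_eS]
    by_cases h0 : p0 n j ∈ t
    · rw [if_pos (Finset.mem_insert_of_mem h0), smul_zero, if_neg (fun hc => hc.1 h0)]
    · have h0' : p0 n j ∉ insert (p1 n j) t := by
        rw [Finset.mem_insert]
        rintro (h | h)
        · exact p0_ne_p1 h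
        · exact h0 h
      rw [if_neg h0', if_pos ⟨h0, h1⟩, smul_smul, ← pow_add, ← cnt_pair_X h0]
      have heven : Even (cnt t (p1 n j) + cnt t (p1 n j)) := ⟨cnt t (p1 n j), rfl⟩
      rw [heven.neg_one_pow, one_smul]

theorem rf2_mul_expand (y : Grass n) :
    rf2 n * y = ∑ l : Fin n, fgen n (p0 n l) * (fgen n (p1 n l) * y) := by
  rw [rf2_eq, Finset.sum_mul]
  exact Finset.sum_congr rfl (fun l _ => mul_assoc _ _ _)

def BfL (n : ℕ) : Grass n →ₗ[ℝ] Grass n →ₗ[ℝ] ℝ :=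
  ∑ S : Finset (Fin (2*n)),
    LinearMap.smulRight ((bGr (n := n)).coord S) ((bGr (n := n)).coord S)

theorem BfL_apply (x y : Grass n) :
    BfL n x y = ∑ S : Finset (Fin (2*n)),
      ((bGr (n := n)).repr x S) * ((bGr (n := n)).repr y S) := by
  rw [BfL, LinearMap.sum_apply, LinearMap.sum_apply]
  exact Finset.sum_congr rfl (fun S _ => by
    rw [LinearMap.smulRight_apply, LinearMap.smul_apply, smul_eq_mul,
      Module.Basis.coord_apply, Module.Basis.coord_apply])

theorem BfL_basis (s t : Finset (Fin (2*n))) :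
    BfL n (eS n s) (eS n t) = if s = t then 1 else 0 := by
  rw [show eS n s = bGr (n := n) s from (bGr_apply s).symm,
    show eS n t = bGr (n := n) t from (bGr_apply t).symm]
  rw [BfL_apply]
  simp only [Module.Basis.repr_self, Finsupp.single_apply]
  rw [Finset.sum_eq_single s]
  · rw [if_pos rfl, one_mul]
    by_cases h : s = t
    · rw [if_pos h.symm, if_pos h]
    · rw [if_neg (fun hh => h hh.symm), if_neg h]
  · intro T _ hTs
    rw [if_neg (fun h => hTs h.symm), zero_mul]
  · intro h
    exact absurd (Finset.mem_univ s) h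

theorem BfL_self_eq_zero {x : Grass n} (h : BfL n x x = 0) : x = 0 := by
  rw [BfL_apply] at h
  have hz : ∀ S ∈ (Finset.univ : Finset (Finset (Fin (2*n)))),
      ((bGr (n := n)).repr x S) * ((bGr (n := n)).repr x S) = 0 := by
    intro S hS
    have := (Finset.sum_eq_zero_iff_of_nonneg
      (fun S _ => mul_self_nonneg ((bGr (n := n)).repr x S))).1 h S hS
    exact this
  have hr : (bGr (n := n)).repr x = 0 := by
    ext S
    have := hz S (Finset.mem_univ S)
    exact mul_self_eq_zero.1 this
  have := congrArg (bGr (n := n)).repr.symm hr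
  rwa [LinearEquiv.symm_apply_apply, map_zero] at this

theorem pair_indicator (j : Fin n) (s t : Finset (Fin (2*n))) :
    ((p0 n j ∈ s ∧ p1 n j ∈ s) ∧ (s.erase (p1 n j)).erase (p0 n j) = t)
      ↔ ((p0 n j ∉ t ∧ p1 n j ∉ t) ∧ s = insert (p0 n j) (insert (p1 n j) t)) := by
  have hne : p0 n j ≠ p1 n j := fun h => p0_ne_p1 h
  constructor
  · rintro ⟨⟨h0, h1⟩, rfl⟩
    refine ⟨⟨Finset.notMem_erase _ _, fun h =>
      Finset.notMem_erase (p1 n j) s (Finset.mem_of_mem_erase h)⟩, ?_⟩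
    rw [Finset.erase_right_comm]
    rw [Finset.insert_erase (Finset.mem_erase.2 ⟨fun h => p1_ne_p0 h, h1⟩)]
    rw [Finset.insert_erase h0]
  · rintro ⟨⟨h0, h1⟩, rfl⟩
    refine ⟨⟨Finset.mem_insert_self _ _,
      Finset.mem_insert_of_mem (Finset.mem_insert_self _ _)⟩, ?_⟩
    rw [Finset.insert_comm]
    rw [Finset.erase_insert (by
      rw [Finset.mem_insert]
      rintro (h | h)
      · exact hne h.symm
      · exact h1 h)]
    rw [Finset.erase_insert h0]

theorem adj_basis (s t : Finset (Fin (2*n))) :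
    BfL n (lam n (eS n s)) (eS n t) = -(BfL n (eS n s) (rf2 n * eS n t)) := by
  have hL : lam n (eS n s) = ∑ j : Fin n,
      (if p0 n j ∈ s ∧ p1 n j ∈ s then -eS n ((s.erase (p1 n j)).erase (p0 n j))
       else 0) := by
    rw [lam_apply]
    exact Finset.sum_congr rfl (fun j _ => dd_eS j s)
  have hR : rf2 n * eS n t = ∑ j : Fin n,
      (if p0 n j ∉ t ∧ p1 n j ∉ t then eS n (insert (p0 n j) (insert (p1 n j) t))
       else 0) := by
    rw [rf2_mul_expand]
    exact Finset.sum_congr rfl (fun j _ => XX_eS j t)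
  rw [hL, hR, map_sum, LinearMap.sum_apply, map_sum, ← Finset.sum_neg_distrib]
  refine Finset.sum_congr rfl (fun j _ => ?_)
  by_cases hs : p0 n j ∈ s ∧ p1 n j ∈ s
  · by_cases ht : p0 n j ∉ t ∧ p1 n j ∉ t
    · rw [if_pos hs, if_pos ht, map_neg, LinearMap.neg_apply, BfL_basis, BfL_basis]
      by_cases heq : (s.erase (p1 n j)).erase (p0 n j) = t
      · rw [if_pos heq, if_pos ((pair_indicator j s t).1 ⟨hs, heq⟩).2]
      · rw [if_neg heq, if_neg (fun h => heq ((pair_indicator j s t).2 ⟨ht, h⟩).2)]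
    · rw [if_pos hs, if_neg ht, map_neg, LinearMap.neg_apply, BfL_basis, map_zero,
        if_neg (fun heq => ht ((pair_indicator j s t).1 ⟨hs, heq⟩).1), neg_zero]
  · rw [if_neg hs, map_zero, LinearMap.zero_apply]
    by_cases ht : p0 n j ∉ t ∧ p1 n j ∉ t
    · rw [if_pos ht, BfL_basis,
        if_neg (fun h => hs ((pair_indicator j s t).2 ⟨ht, h⟩).1), neg_zero]
    · rw [if_neg ht, map_zero, neg_zero]

theorem adj (x y : Grass n) : BfL n (lam n x) y = -(BfL n x (rf2 n * y)) := by
  have hFG : (BfL n).comp (lam n)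
      = -((BfL n).compl₂ (LinearMap.mulLeft ℝ (rf2 n))) := by
    apply (bGr (n := n)).ext
    intro s
    apply (bGr (n := n)).ext
    intro t
    simp only [LinearMap.comp_apply, LinearMap.neg_apply, LinearMap.compl₂_apply,
      LinearMap.mulLeft_apply, bGr_apply]
    exact adj_basis s t
  have h1 := LinearMap.congr_fun (LinearMap.congr_fun hFG x) y
  simpa only [LinearMap.comp_apply, LinearMap.neg_apply, LinearMap.compl₂_apply,
    LinearMap.mulLeft_apply] using h1

theorem ker_cap_range {x g : Grass n} (hx : lam n x = 0) (hg : x = rf2 n * g) :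
    x = 0 := by
  apply BfL_self_eq_zero
  have h := adj x g
  rw [hx, map_zero, LinearMap.zero_apply, ← hg] at h
  linarith

theorem ker_lapF_eq : LinearMap.ker (lapF n) = LinearMap.ker (lam n) := by
  ext x
  simp only [LinearMap.mem_ker, lapF_eq, LinearMap.smul_apply]
  constructor
  · intro h
    rcases smul_eq_zero.1 h with h4 | h
    · norm_num at h4
    · exact h
  · intro h
    rw [h, smul_zero]

end DimHf

open DimHf

/-- in the purely fermionic case, ℋ^f_k = 0 for k > n, and
dim ℋ^f_k = C(2n, k) − C(2n, k−2) for 0 ≤ k ≤ n (with C(2n, j) = 0 for j < 0). -/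
theorem dim_Hf (n : ℕ) (hn : 1 ≤ n) (k : ℕ) :
    (k > n → Hf n k = ⊥) ∧
    (k ≤ n → Module.finrank ℝ (Hf n k) =
      Nat.choose (2*n) k - (if 2 ≤ k then Nat.choose (2*n) (k-2) else 0)) := by
  constructor
  · intro hk
    rw [Hf, ker_lapF_eq, eq_bot_iff]
    rintro x ⟨hx1, hx2⟩
    have hlam : lam n x = 0 := LinearMap.mem_ker.1 hx2
    have hx0 : x = 0 := high_ker hk hx1 hlam
    rw [Submodule.mem_bot]
    exact hx0
  · intro hk
    by_cases h2 : 2 ≤ k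
    · rw [if_pos h2]
      set ψ := (lam n).domRestrict (Pf n k) with hψ
      have hH : Hf n k = Submodule.map (Pf n k).subtype (LinearMap.ker ψ) := by
        rw [hψ, LinearMap.ker_domRestrict, Submodule.map_comap_subtype, Hf, ker_lapF_eq]
      have hfr1 : Module.finrank ℝ (Hf n k)
          = Module.finrank ℝ (LinearMap.ker ψ) := by
        rw [hH]
        exact (LinearEquiv.finrank_eq (Submodule.equivMapOfInjective (Pf n k).subtype
          (Submodule.injective_subtype _) (LinearMap.ker ψ))).symm
      have hrn : Module.finrank ℝ (LinearMap.range ψ)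
          + Module.finrank ℝ (LinearMap.ker ψ) = Nat.choose (2*n) k := by
        rw [hψ]
        rw [LinearMap.finrank_range_add_finrank_ker ((lam n).domRestrict (Pf n k))]
        exact finrank_Pf k
      have hr_le : Module.finrank ℝ (LinearMap.range ψ) ≤ Nat.choose (2*n) (k-2) := by
        have hle : LinearMap.range ψ ≤ Pf n (k-2) := by
          rw [hψ, LinearMap.range_domRestrict]
          rintro y hy
          obtain ⟨x, hx, rfl⟩ := Submodule.mem_map.1 hy
          exact lam_pf hx
        have h := Submodule.finrank_mono hle
        rwa [finrank_Pf] at h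
      set θ := (LinearMap.mulLeft ℝ (rf2 n)).domRestrict (Pf n (k-2)) with hθ
      have hθker : LinearMap.ker θ = ⊥ := by
        rw [LinearMap.ker_eq_bot']
        intro g hg
        have hg' : rf2 n * (g : Grass n) = 0 := hg
        have h0 := L_inj_low (show k-2 < n by omega) g.2 hg'
        exact Subtype.ext h0
      have hθr : Module.finrank ℝ (LinearMap.range θ) = Nat.choose (2*n) (k-2) := by
        have h := LinearMap.finrank_range_add_finrank_ker θ
        rw [hθker, finrank_bot, add_zero] at h
        rw [h]
        exact finrank_Pf (k-2)
      have hdisj : Submodule.map (Pf n k).subtype (LinearMap.ker ψ)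
          ⊓ LinearMap.range θ = ⊥ := by
        rw [eq_bot_iff]
        rintro x ⟨hx1, hx2⟩
        obtain ⟨y, hy, rfl⟩ := Submodule.mem_map.1 hx1
        obtain ⟨g, hg⟩ := LinearMap.mem_range.1 hx2
        have hylam : lam n (y : Grass n) = 0 := LinearMap.mem_ker.1 hy
        have hgy : (y : Grass n) = rf2 n * (g : Grass n) := hg.symm
        have h0 : (y : Grass n) = 0 := ker_cap_range hylam hgy
        rw [Submodule.mem_bot]
        exact h0
      have hsum : Module.finrank ℝ (LinearMap.ker ψ)
          + Nat.choose (2*n) (k-2) ≤ Nat.choose (2*n) k := by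
        rw [← hfr1, hH, ← hθr]
        have h1 := Submodule.finrank_sup_add_finrank_inf_eq
          (Submodule.map (Pf n k).subtype (LinearMap.ker ψ)) (LinearMap.range θ)
        rw [hdisj, finrank_bot, add_zero] at h1
        rw [← h1]
        have hsup : Submodule.map (Pf n k).subtype (LinearMap.ker ψ)
            ⊔ LinearMap.range θ ≤ Pf n k := by
          apply sup_le
          · rintro z hz
            obtain ⟨y, _, rfl⟩ := Submodule.mem_map.1 hz
            exact y.2
          · rintro z hz
            obtain ⟨g, hg⟩ := LinearMap.mem_range.1 hz
            have hmem : rf2 n * (g : Grass n) ∈ Pf n (k-2+2) := rf2_mul_pf g.2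
            rw [show k-2+2 = k by omega] at hmem
            have hz' : z = rf2 n * (g : Grass n) := hg.symm
            rwa [hz']
        have h := Submodule.finrank_mono hsup
        rwa [finrank_Pf] at h
      rw [hfr1]
      omega
    · rw [if_neg h2]
      have hHf : Hf n k = Pf n k := by
        rw [Hf, ker_lapF_eq, inf_eq_left]
        intro x hx
        rw [LinearMap.mem_ker]
        exact lam_pf_low (by omega) hx
      rw [hHf, finrank_Pf, Nat.sub_zero]

end
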